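/- Let x, p ∈ ℝ^N, Ω = diag(ω_1,…,ω_N) with distinct ω_k, and F_k = x_k² + Σ_{j≠k} (p_k x_j − x_k p_j)²/(ω_k − ω_j). Then (1/2) Σ_{k=1}^N ω_k F_k = (1/2)(⟨p,p⟩⟨x,x⟩ − ⟨p,x⟩²) + (1/2)⟨Ωx,x⟩. -/

import Mathlib

open Finset

theorem neumann_hamiltonian_as_combination (N : ℕ) (x p ω : Fin N → ℝ)
    (hω : ∀ j k : Fin N, j ≠ k → ω j ≠ ω k) :
    (1/2) * ∑ k, ω k * (x k ^ 2 + ∑ j ∈ Finset.univ.erase k,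
        (p k * x j - x k * p j) ^ 2 / (ω k - ω j))
      = (1/2) * ((∑ i, p i * p i) * (∑ i, x i * x i) - (∑ i, p i * x i) ^ 2)
        + (1/2) * ∑ i, ω i * x i * x i := by
  set g : Fin N → Fin N → ℝ := fun k j =>
    if k = j then 0 else ω k * ((p k * x j - x k * p j) ^ 2 / (ω k - ω j)) with hg
  have key : ∀ k : Fin N, ω k * ∑ j ∈ univ.erase k, (p k * x j - x k * p j) ^ 2 / (ω k - ω j)
      = ∑ j, g k j := by
    intro k
    rw [← Finset.sum_erase (univ) (f := g k) (a := k) (show g k k = 0 by simp [hg]),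
      Finset.mul_sum]
    apply Finset.sum_congr rfl
    intro j hj
    have : k ≠ j := fun h => (Finset.mem_erase.mp hj).1 h.symm
    simp [hg, this]
  have hA2 : 2 * (∑ k, ∑ j, g k j) = ∑ k : Fin N, ∑ j : Fin N,
      (if k = j then 0 else (p k * x j - x k * p j) ^ 2) := by
    have hsymm : (∑ k, ∑ j, g k j) = ∑ k, ∑ j, g j k := Finset.sum_comm
    rw [two_mul]
    nth_rewrite 2 [hsymm]
    rw [← Finset.sum_add_distrib]
    apply Finset.sum_congr rfl; intro k _
    rw [← Finset.sum_add_distrib]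
    apply Finset.sum_congr rfl; intro j _
    by_cases h : k = j
    · simp [hg, h]
    · have hd : ω k - ω j ≠ 0 := sub_ne_zero.mpr (hω k j h)
      have hd' : ω j - ω k ≠ 0 := sub_ne_zero.mpr (hω j k (Ne.symm h))
      simp only [hg, if_neg h, if_neg (Ne.symm h)]
      field_simp
      ring
  have expand : (∑ k : Fin N, ∑ j : Fin N, (if k = j then 0 else (p k * x j - x k * p j) ^ 2))
      = 2 * ((∑ i, p i * p i) * (∑ i, x i * x i) - (∑ i, p i * x i) ^ 2) := by
    have h1 : (∑ k : Fin N, ∑ j : Fin N, (if k = j then 0 else (p k * x j - x k * p j) ^ 2))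
        = ∑ k : Fin N, ∑ j : Fin N, (p k * x j - x k * p j) ^ 2 := by
      apply Finset.sum_congr rfl; intro k _
      apply Finset.sum_congr rfl; intro j _
      by_cases h : k = j
      · rw [if_pos h, h, show p j * x j - x j * p j = 0 from by ring]
        simp
      · simp [h]
    rw [h1]
    have h2 : ∀ k j : Fin N, (p k * x j - x k * p j) ^ 2
        = (p k * p k) * (x j * x j) + (x k * x k) * (p j * p j)
          - 2 * ((p k * x k) * (p j * x j)) := by intros; ring
    simp_rw [h2]
    simp only [Finset.sum_sub_distrib, Finset.sum_add_distrib, ← Finset.mul_sum]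
    rw [← Finset.sum_mul, ← Finset.sum_mul, ← Finset.sum_mul]
    ring
  have lhs_split : ∑ k, ω k * (x k ^ 2 + ∑ j ∈ univ.erase k,
      (p k * x j - x k * p j) ^ 2 / (ω k - ω j))
      = (∑ k, ω k * x k ^ 2) + ∑ k, ∑ j, g k j := by
    rw [← Finset.sum_add_distrib]
    apply Finset.sum_congr rfl; intro k _
    rw [mul_add, key k]
  rw [lhs_split]
  have : (∑ k, ∑ j, g k j) = (∑ i, p i * p i) * (∑ i, x i * x i) - (∑ i, p i * x i) ^ 2 := by
    have := hA2.trans expand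
    linarith
  rw [this]
  have : ∀ i : Fin N, ω i * x i * x i = ω i * x i ^ 2 := by intros; ring
  simp_rw [this]
  ring
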